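/- For the quadratic polynomial f(z) = z² − 29/16 over ℚ, the rational points 7/4, 1/4, −7/4, 5/4, −5/4, −1/4, 3/4, −3/4 and the point at infinity are all preperiodic for f. -/
import Mathlib


/-- For `f(z) = z² - 29/16` on `ℙ¹(ℚ)` (modelled as `Option ℚ`, with `none` the
fixed point at infinity), the points `7/4, 1/4, -7/4, 5/4, -5/4, -1/4, 3/4,
-3/4` and the point at infinity are all preperiodic. -/
theorem stmt_13 :
    letI F : Option ℚ → Option ℚ := fun P => P.map fun z => z ^ 2 - 29 / 16
    ∀ P ∈ ({some (7/4), some (1/4), some (-7/4), some (5/4), some (-5/4),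
        some (-1/4), some (3/4), some (-3/4), none} : Set (Option ℚ)),
      (Set.range fun n : ℕ => F^[n] P).Finite := by
  intro P hP
  set F : Option ℚ → Option ℚ := fun P => P.map fun z => z ^ 2 - 29 / 16 with hF
  set S : Set (Option ℚ) := ({some (7/4), some (1/4), some (-7/4), some (5/4),
      some (-5/4), some (-1/4), some (3/4), some (-3/4), none} : Set (Option ℚ)) with hS
  have hfin : S.Finite := Set.Finite.insert _ (Set.Finite.insert _ (Set.Finite.insert _
    (Set.Finite.insert _ (Set.Finite.insert _ (Set.Finite.insert _ (Set.Finite.insert _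
    (Set.Finite.insert _ (Set.finite_singleton _))))))))
  have hstep : ∀ Q ∈ S, F Q ∈ S := by
    intro Q hQ
    simp only [hS, Set.mem_insert_iff, Set.mem_singleton_iff] at hQ ⊢
    rcases hQ with rfl | rfl | rfl | rfl | rfl | rfl | rfl | rfl | rfl <;>
      simp [F] <;> norm_num
  refine hfin.subset ?_
  rintro _ ⟨n, rfl⟩
  induction n with
  | zero => exact hP
  | succ n ih =>
    show F^[n+1] P ∈ S
    rw [Function.iterate_succ_apply']
    exact hstep _ ih
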